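/- The order-2 automorphism ω of psl(2|2) negates the supertrace form: ⟨ω(A), ω(B)⟩ = -⟨A,B⟩ for all A, B in psl(2|2). -/

import Mathlib

open Matrix

noncomputable section

abbrev M4 := Matrix (Fin 4) (Fin 4) ℂ

def Eij (i j : Fin 4) : M4 := Matrix.single i j 1

/-- Even basis elements of psl(2|2) (as matrix representatives). -/
def E1 : M4 := Eij 0 1
def H1 : M4 := Eij 0 0 - Eij 1 1
def F1 : M4 := Eij 1 0
def E2 : M4 := Eij 2 3
def H2 : M4 := Eij 2 2 - Eij 3 3
def F2 : M4 := Eij 3 2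

/-- Odd basis elements of psl(2|2) (as matrix representatives). -/
def epp : M4 := Eij 0 3
def epm : M4 := -Eij 0 2
def emp : M4 := Eij 1 3
def emm : M4 := -Eij 1 2
def fpp : M4 := -Eij 2 1
def fpm : M4 := -Eij 3 1
def fmp : M4 := Eij 2 0
def fmm : M4 := Eij 3 0

/-- The span of the identity: passing to the quotient psl(2|2) means working
modulo this submodule. -/
def idSpan : Submodule ℂ M4 := Submodule.span ℂ {(1 : M4)}

/-- The supertrace in the defining representation of gl(2|2). -/
def str (A : M4) : ℂ := A 0 0 + A 1 1 - A 2 2 - A 3 3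

/-- Parity of an index: indices 0,1 are even, 2,3 are odd. -/
def par (i : Fin 4) : Bool := decide (2 ≤ (i : ℕ))

/-- The parity operator: negates the odd (off-diagonal block) part of a matrix. -/
def P : M4 →ₗ[ℂ] M4 where
  toFun A := Matrix.of fun i j => if par i = par j then A i j else -A i j
  map_add' A B := by
    ext i j
    by_cases h : par i = par j <;> simp [h] <;> ring
  map_smul' c A := by
    ext i j
    by_cases h : par i = par j <;> simp [h] <;> ring

/-- `A` is homogeneous of parity `a` (`false` = even, `true` = odd). -/
def isHomog (a : Bool) (A : M4) : Prop := P A = if a then -A else A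

/-- The super-adjoint action of a homogeneous element `A` of parity `a`:
`[A, X] = A·X - (-1)^{|A||X|} X·A`, implemented linearly using the parity
operator. -/
def sad (a : Bool) (A : M4) : M4 →ₗ[ℂ] M4 :=
  LinearMap.mulLeft ℂ A - (LinearMap.mulRight ℂ A).comp (if a then P else LinearMap.id)

end

/-!
STATEMENT 6: The order-2 automorphism ω of psl(2|2) negates the supertrace
form: ⟨ω(A), ω(B)⟩ = -⟨A,B⟩ for all A, B in psl(2|2).

Here ω is any linear map on the matrix representatives taking the prescribed
values on the basis of psl(2|2) and fixing the identity (so that it is a lift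
of ω to sl(2|2)); A and B range over supertraceless matrices, i.e. over
representatives of elements of psl(2|2).
-/



noncomputable section

def sw : Fin 4 → Fin 4 := ![2,3,0,1]

def sgm (A : M4) : M4 :=
  Matrix.of fun i j => if par i = par j then A (sw i) (sw j) else -A (sw i) (sw j)

lemma sgm00 (A : M4) : sgm A 0 0 = A 2 2 := rfl
lemma sgm01 (A : M4) : sgm A 0 1 = A 2 3 := rfl
lemma sgm02 (A : M4) : sgm A 0 2 = -A 2 0 := rfl
lemma sgm03 (A : M4) : sgm A 0 3 = -A 2 1 := rfl
lemma sgm10 (A : M4) : sgm A 1 0 = A 3 2 := rfl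
lemma sgm11 (A : M4) : sgm A 1 1 = A 3 3 := rfl
lemma sgm12 (A : M4) : sgm A 1 2 = -A 3 0 := rfl
lemma sgm13 (A : M4) : sgm A 1 3 = -A 3 1 := rfl
lemma sgm20 (A : M4) : sgm A 2 0 = -A 0 2 := rfl
lemma sgm21 (A : M4) : sgm A 2 1 = -A 0 3 := rfl
lemma sgm22 (A : M4) : sgm A 2 2 = A 0 0 := rfl
lemma sgm23 (A : M4) : sgm A 2 3 = A 0 1 := rfl
lemma sgm30 (A : M4) : sgm A 3 0 = -A 1 2 := rfl
lemma sgm31 (A : M4) : sgm A 3 1 = -A 1 3 := rfl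
lemma sgm32 (A : M4) : sgm A 3 2 = A 1 0 := rfl
lemma sgm33 (A : M4) : sgm A 3 3 = A 1 1 := rfl

set_option maxHeartbeats 1600000 in
lemma decomp (A : M4) (h : str A = 0) :
    A = A 0 1 • E1 + ((A 0 0 - A 1 1)/2) • H1 + A 1 0 • F1 + A 2 3 • E2
      + ((A 2 2 - A 3 3)/2) • H2 + A 3 2 • F2 + A 0 3 • epp + (-(A 0 2)) • epm
      + A 1 3 • emp + (-(A 1 2)) • emm + (-(A 2 1)) • fpp + (-(A 3 1)) • fpm
      + A 2 0 • fmp + A 3 0 • fmm + ((A 0 0 + A 1 1)/2) • (1 : M4) := by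
  have h' : A 0 0 + A 1 1 - A 2 2 - A 3 3 = 0 := h
  ext i j
  fin_cases i <;> fin_cases j <;>
    simp [E1, H1, F1, E2, H2, F2, epp, epm, emp, emm, fpp, fpm, fmp, fmm, Eij,
      Matrix.single, Matrix.one_apply] <;>
    first
      | ring1
      | linear_combination h'/2
      | linear_combination -h'/2

lemma str_sgm (A : M4) : str (sgm A) = -str A := by
  simp only [str, sgm00, sgm11, sgm22, sgm33]
  ring

set_option maxHeartbeats 1600000 in
lemma omega_eq_sgm (ω : M4 →ₗ[ℂ] M4)
    (h1 : ω E1 = E2) (h2 : ω E2 = E1) (h3 : ω H1 = H2) (h4 : ω H2 = H1)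
    (h5 : ω F1 = F2) (h6 : ω F2 = F1)
    (h7 : ω epp = fpp) (h8 : ω fpp = epp) (h9 : ω epm = fmp) (h10 : ω fmp = epm)
    (h11 : ω emp = fpm) (h12 : ω fpm = emp) (h13 : ω emm = fmm) (h14 : ω fmm = emm)
    (h15 : ω (1 : M4) = 1) (A : M4) (hA : str A = 0) : ω A = sgm A := by
  have h' : A 0 0 + A 1 1 - A 2 2 - A 3 3 = 0 := hA
  have hsA : str (sgm A) = 0 := by rw [str_sgm, hA]; ring
  conv_lhs => rw [decomp A hA]
  conv_rhs => rw [decomp (sgm A) hsA]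
  simp only [map_add, _root_.map_smul, h1, h2, h3, h4, h5, h6, h7, h8, h9, h10, h11,
    h12, h13, h14, h15, sgm00, sgm01, sgm02, sgm03, sgm10, sgm11, sgm12, sgm13, sgm20, sgm21, sgm22, sgm23, sgm30, sgm31, sgm32, sgm33]
  match_scalars <;>
    first
      | ring1
      | linear_combination h'/2
      | linear_combination -h'/2

set_option maxHeartbeats 1600000 in
lemma str_sgm_mul (A B : M4) : str (sgm A * sgm B) = -str (A * B) := by
  simp only [str, Matrix.mul_apply, Fin.sum_univ_four, sgm00, sgm01, sgm02, sgm03, sgm10, sgm11, sgm12, sgm13, sgm20, sgm21, sgm22, sgm23, sgm30, sgm31, sgm32, sgm33]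
  ring

end

theorem omega_negates_supertrace_form (ω : M4 →ₗ[ℂ] M4)
    (h1 : ω E1 = E2) (h2 : ω E2 = E1) (h3 : ω H1 = H2) (h4 : ω H2 = H1)
    (h5 : ω F1 = F2) (h6 : ω F2 = F1)
    (h7 : ω epp = fpp) (h8 : ω fpp = epp) (h9 : ω epm = fmp) (h10 : ω fmp = epm)
    (h11 : ω emp = fpm) (h12 : ω fpm = emp) (h13 : ω emm = fmm) (h14 : ω fmm = emm)
    (h15 : ω (1 : M4) = 1) :
    ∀ A B : M4, str A = 0 → str B = 0 → str (ω A * ω B) = -str (A * B) := by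
  intro A B hA hB
  rw [omega_eq_sgm ω h1 h2 h3 h4 h5 h6 h7 h8 h9 h10 h11 h12 h13 h14 h15 A hA,
    omega_eq_sgm ω h1 h2 h3 h4 h5 h6 h7 h8 h9 h10 h11 h12 h13 h14 h15 B hB,
    str_sgm_mul]
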